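/- Every torsion-free IFI-group is si-simple. -/

import Mathlib

/-- A subgroup `S` of an abelian group `G` is *strongly invariant* if every additive
homomorphism `ψ : S →+ G` maps `S` into itself. -/
def IsStronglyInvariant {G : Type*} [AddCommGroup G] (S : AddSubgroup G) : Prop :=
  ∀ (ψ : S →+ G) (s : S), (ψ s : G) ∈ S

/-- A subgroup `F` of `G` is *fully invariant* if every endomorphism of `G` maps `F` into
itself. -/
def IsFullyInvariant {G : Type*} [AddCommGroup G] (F : AddSubgroup G) : Prop :=
  ∀ (φ : G →+ G), ∀ x ∈ F, φ x ∈ F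

/-- A group is *si-simple* if its only strongly invariant subgroups are `⊥` and `⊤`. -/
def SiSimple (G : Type*) [AddCommGroup G] : Prop :=
  ∀ S : AddSubgroup G, IsStronglyInvariant S → S = ⊥ ∨ S = ⊤

/-- A non-zero group `G` is an *ISI-group* if all of its strongly invariant subgroups
different from `⊥` and `⊤` (if any) are isomorphic to one another. -/
def IsISI (G : Type*) [AddCommGroup G] : Prop :=
  Nontrivial G ∧ ∀ H F : AddSubgroup G, IsStronglyInvariant H → IsStronglyInvariant F →
    H ≠ ⊥ → H ≠ ⊤ → F ≠ ⊥ → F ≠ ⊤ → Nonempty (H ≃+ F)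

/-- A non-zero group `G` is a *strongly ISI-group* if all of its non-zero strongly invariant
subgroups are isomorphic to one another. -/
def IsStronglyISI (G : Type*) [AddCommGroup G] : Prop :=
  Nontrivial G ∧ ∀ H F : AddSubgroup G, IsStronglyInvariant H → IsStronglyInvariant F →
    H ≠ ⊥ → F ≠ ⊥ → Nonempty (H ≃+ F)

/-- A non-zero group `G` is an *IFI-group* if all of its fully invariant subgroups
different from `⊥` and `⊤` (if any) are isomorphic to one another. -/
def IsIFI (G : Type*) [AddCommGroup G] : Prop :=
  Nontrivial G ∧ ∀ H F : AddSubgroup G, IsFullyInvariant H → IsFullyInvariant F →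
    H ≠ ⊥ → H ≠ ⊤ → F ≠ ⊥ → F ≠ ⊤ → Nonempty (H ≃+ F)

/-- Multiplication by a natural number `n`, as an endomorphism of `G`. -/
def nsmulHom {G : Type*} [AddCommGroup G] (n : ℕ) : G →+ G where
  toFun x := n • x
  map_zero' := smul_zero n
  map_add' a b := smul_add n a b

/-- `H` is `n`-pure in `G` if `H ∩ nG = nH`. -/
def IsNPure {G : Type*} [AddCommGroup G] (n : ℕ) (H : AddSubgroup G) : Prop :=
  H ⊓ (nsmulHom (G := G) n).range = H.map (nsmulHom n)

/-- `H` is a pure subgroup of `G` if `H ∩ nG = nH` for every positive natural number `n`. -/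
def IsPureSubgroup {G : Type*} [AddCommGroup G] (H : AddSubgroup G) : Prop :=
  ∀ n : ℕ, 0 < n → IsNPure n H

/-- A torsion-free group is *s-irreducible* if it has no pure strongly invariant subgroups
other than `⊥` and `⊤`. -/
def SIrreducible (G : Type*) [AddCommGroup G] : Prop :=
  ∀ H : AddSubgroup G, IsPureSubgroup H → IsStronglyInvariant H → H = ⊥ ∨ H = ⊤

/-- `Hom(F,G)F = ∑_{φ ∈ Hom(F,G)} φ(F)`, the subgroup generated by all images of
homomorphisms from `F` to `G`. -/
def homGenSub {G : Type*} [AddCommGroup G] (F : AddSubgroup G) : AddSubgroup G :=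
  ⨆ φ : F →+ G, φ.range

/-- A group is divisible if `nD = D` for every positive natural number `n`. -/
def IsDivisibleGroup (G : Type*) [AddCommGroup G] : Prop :=
  ∀ n : ℕ, 0 < n → ∀ x : G, ∃ y : G, n • y = x

/-- Every torsion-free IFI-group is si-simple. -/
lemma tf_nsmul_eq_zero {G : Type*} [AddCommGroup G] (htf : ∀ g : G, g ≠ 0 → ¬IsOfFinAddOrder g)
    {n : ℕ} (hn : 0 < n) {x : G} (hx : n • x = 0) : x = 0 := by
  by_contra h
  exact htf x h (isOfFinAddOrder_iff_nsmul_eq_zero.mpr ⟨n, hn, hx⟩)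

theorem statement19 {G : Type*} [AddCommGroup G] (htf : ∀ g : G, g ≠ 0 → ¬IsOfFinAddOrder g)
    (hifi : IsIFI G) : SiSimple G := by
  intro S hS
  by_contra hcon
  push_neg at hcon
  obtain ⟨hSbot, hStop⟩ := hcon
  apply hStop
  rw [AddSubgroup.eq_top_iff']
  by_cases hdiv : ∀ n : ℕ, 0 < n → ∀ x : G, ∃ y : G, n • y = x
  · -- divisible case
    obtain ⟨s, hsS, hs0⟩ : ∃ s ∈ S, s ≠ 0 := by
      by_contra h
      push_neg at h
      exact hSbot ((AddSubgroup.eq_bot_iff_forall S).mpr h)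
    letI : DivisibleBy G ℕ := divisibleByOfSMulRightSurj G ℕ
      (fun {n} hn x => (hdiv n (Nat.pos_of_ne_zero hn) x))
    letI : DivisibleBy G ℤ := AddGroup.divisibleByIntOfDivisibleByNat G
    have baer : Module.Baer ℤ G := Module.Baer.of_divisible G
    intro x
    set sS : S := ⟨s, hsS⟩ with hsSdef
    have hf : Function.Injective (zmultiplesHom S sS) := by
      rw [injective_iff_map_eq_zero]
      intro k hk
      by_contra hk0
      have h1 : (k • sS : S) = 0 := hk
      have h2 : k • s = 0 := by
        have := congrArg (Subtype.val) h1
        simpa using this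
      have h3 : (k.natAbs : ℤ) • s = 0 := by
        rcases Int.natAbs_eq k with h | h
        · rw [← h]; exact h2
        · rw [← neg_neg ((k.natAbs : ℤ)), ← h, neg_smul, h2, neg_zero]
      have h4 : k.natAbs • s = 0 := by rwa [natCast_zsmul] at h3
      exact hs0 (tf_nsmul_eq_zero htf (Int.natAbs_pos.mpr hk0) h4)
    obtain ⟨ψ, hψ⟩ := baer.extension_property_addMonoidHom
      ((zmultiplesHom S sS) : ℤ →+ S) hf (zmultiplesHom G x)
    have hval : ψ sS = x := by
      have := DFunLike.congr_fun hψ (1 : ℤ)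
      simpa [zmultiplesHom_apply] using this
    have := hS ψ sS
    rwa [hval] at this
  · -- non-divisible case
    push_neg at hdiv
    obtain ⟨n, hn, x0, hx0⟩ := hdiv
    set R := (nsmulHom (G := G) n).range with hR
    have hmem : ∀ x : G, x ∈ R ↔ ∃ y : G, n • y = x := by
      intro x
      constructor
      · rintro ⟨y, hy⟩; exact ⟨y, hy⟩
      · rintro ⟨y, hy⟩; exact ⟨y, hy⟩
    have hRtop : R ≠ ⊤ := by
      intro h
      obtain ⟨y, hy⟩ := (hmem x0).mp (h ▸ AddSubgroup.mem_top x0)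
      exact hx0 y hy
    have hRbot : R ≠ ⊥ := by
      haveI := hifi.1
      obtain ⟨g, hg⟩ := exists_ne (0 : G)
      intro h
      have hng : n • g ∈ R := (hmem _).mpr ⟨g, rfl⟩
      rw [h, AddSubgroup.mem_bot] at hng
      exact hg (tf_nsmul_eq_zero htf hn hng)
    have hSfi : IsFullyInvariant S := fun φ x hx => hS (φ.comp S.subtype) ⟨x, hx⟩
    have hRfi : IsFullyInvariant R := by
      intro φ x hx
      obtain ⟨y, hy⟩ := (hmem x).mp hx
      exact (hmem _).mpr ⟨φ y, by rw [← map_nsmul, hy]⟩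
    obtain ⟨e⟩ := hifi.2 S R hSfi hRfi hSbot hStop hRbot hRtop
    have hinj : Function.Injective (nsmulHom (G := G) n) := by
      rw [injective_iff_map_eq_zero]
      intro a ha
      exact tf_nsmul_eq_zero htf hn ha
    let i : G ≃+ R := AddMonoidHom.ofInjective hinj
    let ψ : S →+ G := (i.symm.toAddMonoidHom).comp e.toAddMonoidHom
    intro x
    have := hS ψ (e.symm (i x))
    simpa [ψ, AddEquiv.apply_symm_apply] using this
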